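/- arXiv:1102.2101 — 4 statements merged into one kernel-verified Lean document; each statement's English description precedes it below -/
import Mathlib

section
/- For every real number α ∈ [0,2] and q ∈ [1,∞), define δ : [0,2] → [0,∞) by δ(ε) = ε^q if ε ∈ [0,α] and δ(ε) = q·α^(q-1)·ε − α^q·(q−1) if ε ∈ [α,2]. Then for all ε ∈ [0,2] we have δ(ε) ≥ (α/2)^(q−1) · ε^q. -/
/-- For `α ∈ [0,2]`, `q ≥ 1`, the piecewise function `δ(ε) = ε^q` on `[0,α]` and
`δ(ε) = q·α^(q-1)·ε − α^q·(q−1)` on `[α,2]` satisfies `δ(ε) ≥ (α/2)^(q−1)·ε^q` on `[0,2]`. -/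
theorem stmt0 (α q : ℝ) (hα : α ∈ Set.Icc (0:ℝ) 2) (hq : 1 ≤ q)
    (δ : ℝ → ℝ)
    (hδ : ∀ ε ∈ Set.Icc (0:ℝ) 2,
      δ ε = if ε ≤ α then ε ^ q else q * α ^ (q - 1) * ε - α ^ q * (q - 1)) :
    ∀ ε ∈ Set.Icc (0:ℝ) 2, (α / 2) ^ (q - 1) * ε ^ q ≤ δ ε := by
  obtain ⟨hα0, hα2⟩ := hα
  intro ε hε
  obtain ⟨hε0, hε2⟩ := hε
  rw [hδ ε ⟨hε0, hε2⟩]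
  split_ifs with h
  · have h1 : (α / 2) ^ (q - 1) ≤ 1 :=
      Real.rpow_le_one (by linarith) (by linarith) (by linarith)
    nlinarith [Real.rpow_nonneg hε0 q]
  · push_neg at h
    have hεpos : 0 < ε := lt_of_le_of_lt hα0 h
    have key : (α / 2) ^ (q - 1) ≤ (α / ε) ^ (q - 1) := by
      apply Real.rpow_le_rpow (by positivity) _ (by linarith)
      exact div_le_div_of_nonneg_left hα0 hεpos hε2
    have hrsplit : ε ^ q = ε ^ (q - 1) * ε := by
      nth_rewrite 1 [show q = (q - 1) + 1 by ring]
      rw [Real.rpow_add hεpos, Real.rpow_one]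
    have h2 : (α / ε) ^ (q - 1) * ε ^ q = α ^ (q - 1) * ε := by
      rw [Real.div_rpow hα0 hεpos.le, hrsplit]
      have hne : ε ^ (q - 1) ≠ 0 := by positivity
      field_simp
    have hαq : α ^ q = α ^ (q - 1) * α := by
      rcases eq_or_lt_of_le hα0 with hz | hpos
      · rw [← hz, Real.zero_rpow (by linarith : q ≠ 0), mul_zero]
      · nth_rewrite 1 [show q = (q - 1) + 1 by ring]
        rw [Real.rpow_add hpos, Real.rpow_one]
    have h3 : (α / 2) ^ (q - 1) * ε ^ q ≤ α ^ (q - 1) * ε := by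
      calc (α / 2) ^ (q - 1) * ε ^ q ≤ (α / ε) ^ (q - 1) * ε ^ q := by
            have := Real.rpow_nonneg hε0 q
            nlinarith
        _ = α ^ (q - 1) * ε := h2
    have h4 : α ^ (q - 1) * ε ≤ q * α ^ (q - 1) * ε - α ^ q * (q - 1) := by
      have hnn : 0 ≤ α ^ (q - 1) := Real.rpow_nonneg hα0 _
      nlinarith [mul_nonneg (mul_nonneg (by linarith : (0:ℝ) ≤ q - 1) hnn) (by linarith : (0:ℝ) ≤ ε - α)]
    linarith
end

section
/- Let h : [α,2] → ℝ be defined by h(ε) = q·α^(q−1)·ε − α^q·(q−1) − (α/2)^(q−1)·ε^q, where 0 ≤ α ≤ 2 and q ≥ 1. Then h is nondecreasing on [α,2] and h(α) ≥ 0; consequently h(ε) ≥ 0 for all ε ∈ [α,2]. -/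
/-- The function `h(ε) = q·α^(q−1)·ε − α^q·(q−1) − (α/2)^(q−1)·ε^q` is nondecreasing on
`[α,2]`, satisfies `h(α) ≥ 0`, and hence is nonnegative on `[α,2]`. -/
theorem stmt1 (α q : ℝ) (hα : α ∈ Set.Icc (0:ℝ) 2) (hq : 1 ≤ q)
    (h : ℝ → ℝ)
    (hh : ∀ ε : ℝ, h ε = q * α ^ (q - 1) * ε - α ^ q * (q - 1) - (α / 2) ^ (q - 1) * ε ^ q) :
    MonotoneOn h (Set.Icc α 2) ∧ 0 ≤ h α ∧ ∀ ε ∈ Set.Icc α 2, 0 ≤ h ε := by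
  obtain ⟨hα0, hα2⟩ := hα
  have hq0 : (0:ℝ) < q := lt_of_lt_of_le one_pos hq
  have hq1 : 0 ≤ q - 1 := by linarith
  -- h(α) ≥ 0
  have hhα : 0 ≤ h α := by
    rcases eq_or_lt_of_le hα0 with h0 | h0
    · rw [hh]
      rw [← h0]
      rw [Real.zero_rpow (ne_of_gt hq0)]
      ring_nf
      simp
    · have hpow : α ^ (q - 1) * α = α ^ q := by
        rw [← Real.rpow_add_one (ne_of_gt h0) (q - 1)]
        norm_num
      have hle1 : (α / 2) ^ (q - 1) ≤ 1 :=
        Real.rpow_le_one (by linarith) (by linarith) hq1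
      have hαq : 0 ≤ α ^ q := Real.rpow_nonneg hα0 q
      rw [hh]
      have : q * α ^ (q - 1) * α - α ^ q * (q - 1) - (α / 2) ^ (q - 1) * α ^ q
          = α ^ q * (1 - (α / 2) ^ (q - 1)) := by
        rw [mul_assoc, hpow]; ring
      rw [this]
      exact mul_nonneg hαq (by linarith)
  -- monotonicity
  have hmono : MonotoneOn h (Set.Icc α 2) := by
    have hcont : ContinuousOn h (Set.Icc α 2) := by
      have : ContinuousOn (fun ε : ℝ => q * α ^ (q - 1) * ε - α ^ q * (q - 1)
          - (α / 2) ^ (q - 1) * ε ^ q) (Set.Icc α 2) := by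
        apply ContinuousOn.sub
        · fun_prop
        · exact ContinuousOn.mul continuousOn_const
            (fun x _ => (Real.continuousAt_rpow_const x q (Or.inr hq0.le)).continuousWithinAt)
      exact this.congr (fun x _ => hh x)
    have hderiv : ∀ x ∈ Set.Ioo α 2, HasDerivAt h
        (q * α ^ (q - 1) - (α / 2) ^ (q - 1) * (q * x ^ (q - 1))) x := by
      intro x hx
      have hd : HasDerivAt (fun ε : ℝ => q * α ^ (q - 1) * ε - α ^ q * (q - 1)
          - (α / 2) ^ (q - 1) * ε ^ q)
          (q * α ^ (q - 1) - (α / 2) ^ (q - 1) * (q * x ^ (q - 1))) x := by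
        have h1 : HasDerivAt (fun ε : ℝ => ε ^ q) (q * x ^ (q - 1)) x :=
          Real.hasDerivAt_rpow_const (Or.inr hq)
        have h2 := ((hasDerivAt_id x).const_mul (q * α ^ (q - 1))).sub_const (α ^ q * (q - 1))
        have h3 := h2.sub (h1.const_mul ((α / 2) ^ (q - 1)))
        simpa [mul_comm, Pi.sub_def] using h3
      exact hd.congr_of_eventuallyEq (Filter.Eventually.of_forall fun y => (hh y))
    apply monotoneOn_of_deriv_nonneg (convex_Icc α 2) hcont
    · intro x hx
      rw [interior_Icc] at hx
      exact ((hderiv x hx).differentiableAt).differentiableWithinAt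
    · intro x hx
      rw [interior_Icc] at hx
      rw [(hderiv x hx).deriv]
      have hx0 : 0 ≤ x := le_trans hα0 hx.1.le
      have key : (α / 2) ^ (q - 1) * x ^ (q - 1) ≤ α ^ (q - 1) := by
        rw [← Real.mul_rpow (by linarith) hx0]
        apply Real.rpow_le_rpow (by positivity) _ hq1
        nlinarith [hx.2.le]
      nlinarith [Real.rpow_nonneg (show (0:ℝ) ≤ α/2 by linarith) (q-1),
        Real.rpow_nonneg hx0 (q-1)]
  refine ⟨hmono, hhα, fun ε hε => le_trans hhα (hmono (Set.left_mem_Icc.mpr (le_trans hε.1 hε.2 |>.trans_eq rfl |> fun _ => hα2)) hε hε.1)⟩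
end

section
/- Let L be the τ-pinball loss and Q a probability measure with support in [−1,1]. With t*_max the maximum of the τ-quantile set of Q and q_+ := Q((−∞,t*_max]) − τ, for all t ≥ 0 the excess inner risk satisfies C_Q(t*_max + t) − C*_Q = t·q_+ + ∫_0^t Q((t*_max, t*_max + s)) ds. -/
open MeasureTheory Set

/-- The τ-pinball loss. -/
noncomputable def pinball (τ y t : ℝ) : ℝ := if y < t then (1 - τ) * (t - y) else τ * (y - t)

/-- The τ-quantile set F*_τ(Q). -/
def quantileSet (Q : Measure ℝ) (τ : ℝ) : Set ℝ :=
  {t | τ ≤ (Q (Set.Iic t)).toReal ∧ 1 - τ ≤ (Q (Set.Ici t)).toReal}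

noncomputable def tqmin (Q : Measure ℝ) (τ : ℝ) : ℝ := sInf (quantileSet Q τ)
noncomputable def tqmax (Q : Measure ℝ) (τ : ℝ) : ℝ := sSup (quantileSet Q τ)

/-- The inner pinball risk C_Q(t). -/
noncomputable def innerRisk (Q : Measure ℝ) (τ t : ℝ) : ℝ := ∫ y, pinball τ y t ∂Q

/-- `Q` has a τ-quantile of type `q` with constants `α ∈ (0,2]` and `b > 0`. -/
noncomputable def quantileTypeQ (Q : Measure ℝ) (τ q α b : ℝ) : Prop :=
  (1 < q ∧ α ∈ Set.Ioc (0:ℝ) 2 ∧ 0 < b ∧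
    ∀ s ∈ Set.Icc (0:ℝ) α,
      b * s ^ (q - 1) ≤ (Q (Set.Ioo (tqmin Q τ - s) (tqmin Q τ))).toReal ∧
      b * s ^ (q - 1) ≤ (Q (Set.Ioo (tqmax Q τ) (tqmax Q τ + s))).toReal)
  ∨ (q = 1 ∧ α = 2 ∧ 0 < (Q {tqmin Q τ}).toReal ∧ 0 < (Q {tqmax Q τ}).toReal ∧
      b = (if tqmin Q τ ≠ tqmax Q τ
            then min (Q {tqmin Q τ}).toReal (Q {tqmax Q τ}).toReal
            else min (τ - (Q (Set.Iio (tqmin Q τ))).toReal)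
                     ((Q (Set.Iic (tqmax Q τ))).toReal - τ)))

open Filter Topology

section aux
variable {τ : ℝ} {Q : Measure ℝ}

lemma pinball_measurable (τ t : ℝ) : Measurable (fun y => pinball τ y t) := by
  unfold pinball
  exact Measurable.ite measurableSet_Iio (by fun_prop) (by fun_prop)

lemma pinball_integrable [IsProbabilityMeasure Q] (hτ : τ ∈ Set.Ioo (0:ℝ) 1)
    (hsupp : Q (Set.Icc (-1:ℝ) 1)ᶜ = 0) (t : ℝ) :
    Integrable (fun y => pinball τ y t) Q := by
  have hae : ∀ᵐ y ∂Q, y ∈ Set.Icc (-1:ℝ) 1 := by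
    rw [ae_iff]; exact hsupp
  refine Integrable.mono' (integrable_const (|t| + 1)) (pinball_measurable τ t).aestronglyMeasurable ?_
  filter_upwards [hae] with y hy
  obtain ⟨hy1, hy2⟩ := hy
  have h1 : |y| ≤ 1 := abs_le.2 ⟨hy1, hy2⟩
  unfold pinball
  rw [Real.norm_eq_abs]
  split_ifs with h
  · have h2 : t - y ≤ |t| + 1 := by rcases abs_cases t with ⟨e,_⟩|⟨e,_⟩ <;> linarith
    rw [abs_of_nonneg (mul_nonneg (by linarith [hτ.2]) (by linarith))]
    nlinarith [mul_nonneg hτ.1.le (sub_nonneg.2 h.le)]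
  · have h' := not_lt.1 h
    have h2 : y - t ≤ |t| + 1 := by rcases abs_cases t with ⟨e,_⟩|⟨e,_⟩ <;> linarith
    rw [abs_of_nonneg (mul_nonneg hτ.1.le (by linarith))]
    nlinarith [mul_nonneg (by linarith [hτ.2] : (0:ℝ) ≤ 1 - τ) (sub_nonneg.2 h')]

end aux

section key
variable {τ : ℝ} {Q : Measure ℝ}

/-- inner interval integral of the step function equals pinball difference -/
lemma step_integral (hτ : τ ∈ Set.Ioo (0:ℝ) 1) (a u : ℝ) (hu : 0 ≤ u) (y : ℝ) :
    ∫ s in (0:ℝ)..u, (if y - a < s then (1 - τ) else -τ) = pinball τ y (a + u) - pinball τ y a := by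
  set c := y - a with hc
  have hmono : Monotone (fun s : ℝ => if c < s then (1 - τ) else -τ) := by
    intro s s' hss'
    by_cases h1 : c < s
    · simp [h1, lt_of_lt_of_le h1 hss']
    · by_cases h2 : c < s' <;> simp [h1, h2] <;> linarith [hτ.1, hτ.2]
  rcases le_or_gt c 0 with hc0 | hc0
  · -- y ≤ a : integrand equals 1 - τ on Ioc 0 u
    have : ∫ s in (0:ℝ)..u, (if c < s then (1 - τ) else -τ) = ∫ s in (0:ℝ)..u, (1 - τ) := by
      apply intervalIntegral.integral_congr_ae
      filter_upwards with s hs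
      rw [Set.uIoc_of_le hu] at hs
      rw [if_pos (lt_of_le_of_lt hc0 hs.1)]
    rw [this, intervalIntegral.integral_const, smul_eq_mul]
    unfold pinball
    split_ifs with h1 h2 h2 <;> nlinarith [hτ.1, hτ.2]
  · rcases le_or_gt u c with huc | huc
    · -- integrand equals -τ on [0, u]
      have : ∫ s in (0:ℝ)..u, (if c < s then (1 - τ) else -τ) = ∫ s in (0:ℝ)..u, (-τ) := by
        apply intervalIntegral.integral_congr_ae
        filter_upwards with s hs
        rw [Set.uIoc_of_le hu] at hs
        rw [if_neg (not_lt.2 (le_trans hs.2 huc))]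
      rw [this, intervalIntegral.integral_const, smul_eq_mul]
      unfold pinball
      split_ifs with h1 h2 h2 <;> nlinarith [hτ.1, hτ.2]
    · -- 0 < c < u : split at c
      have hint1 : IntervalIntegrable (fun s : ℝ => if c < s then (1 - τ) else -τ) volume 0 c :=
        hmono.intervalIntegrable
      have hint2 : IntervalIntegrable (fun s : ℝ => if c < s then (1 - τ) else -τ) volume c u :=
        hmono.intervalIntegrable
      rw [← intervalIntegral.integral_add_adjacent_intervals hint1 hint2]
      have e1 : ∫ s in (0:ℝ)..c, (if c < s then (1 - τ) else -τ) = ∫ s in (0:ℝ)..c, (-τ) := by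
        apply intervalIntegral.integral_congr_ae
        filter_upwards with s hs
        rw [Set.uIoc_of_le hc0.le] at hs
        rw [if_neg (not_lt.2 hs.2)]
      have e2 : ∫ s in c..u, (if c < s then (1 - τ) else -τ) = ∫ s in c..u, (1 - τ) := by
        apply intervalIntegral.integral_congr_ae
        filter_upwards with s hs
        rw [Set.uIoc_of_le huc.le] at hs
        rw [if_pos hs.1]
      rw [e1, e2, intervalIntegral.integral_const, intervalIntegral.integral_const,
        smul_eq_mul, smul_eq_mul]
      unfold pinball
      split_ifs with h1 h2 h2 <;> nlinarith [hτ.1, hτ.2]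

/-- integral over Q of the step function -/
lemma step_integral_Q [IsProbabilityMeasure Q] (τ : ℝ) (x : ℝ) :
    ∫ y, (if y < x then (1 - τ) else -τ) ∂Q = (Q (Set.Iio x)).toReal - τ := by
  have he : (fun y => if y < x then (1 - τ) else -τ)
      = fun y => (Set.Iio x).indicator (fun _ => (1:ℝ)) y + (-τ) := by
    ext y; by_cases h : y < x <;> simp [Set.indicator, h] <;> ring
  rw [he, integral_add ((integrable_const (1:ℝ)).indicator measurableSet_Iio) (integrable_const _),
    integral_indicator_const _ measurableSet_Iio, integral_const]
  simp [measure_univ]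
  rw [measureReal_def]; ring

end key

section key2
variable {τ : ℝ} {Q : Measure ℝ}

lemma risk_diff [IsProbabilityMeasure Q] (hτ : τ ∈ Set.Ioo (0:ℝ) 1)
    (hsupp : Q (Set.Icc (-1:ℝ) 1)ᶜ = 0) (a u : ℝ) (hu : 0 ≤ u) :
    innerRisk Q τ (a + u) - innerRisk Q τ a
      = ∫ s in (0:ℝ)..u, ((Q (Set.Iio (a + s))).toReal - τ) := by
  set μ : Measure ℝ := volume.restrict (Set.Ioc 0 u) with hμ
  haveI : IsFiniteMeasure μ := by
    constructor
    rw [hμ, Measure.restrict_apply_univ]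
    exact measure_Ioc_lt_top
  set f : ℝ → ℝ → ℝ := fun s y => if y - a < s then (1 - τ) else -τ with hf
  have hmeas : Measurable (Function.uncurry f) := by
    apply Measurable.ite _ measurable_const measurable_const
    exact measurableSet_lt (by fun_prop) (by fun_prop)
  have hint : Integrable (Function.uncurry f) (μ.prod Q) := by
    refine Integrable.mono' (integrable_const 1) hmeas.aestronglyMeasurable ?_
    filter_upwards with p
    rw [Real.norm_eq_abs]
    by_cases h : p.2 - a < p.1 <;> simp [Function.uncurry, hf, h, abs_le] <;>
      constructor <;> linarith [hτ.1, hτ.2]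
  have hswap := integral_integral_swap hint
  -- LHS of swap: ∫ s, ∫ y, f s y ∂Q ∂μ ; RHS: ∫ y, ∫ s, f s y ∂μ ∂Q
  have hL : ∫ s, (∫ y, f s y ∂Q) ∂μ = ∫ s in (0:ℝ)..u, ((Q (Set.Iio (a + s))).toReal - τ) := by
    rw [intervalIntegral.integral_of_le hu]
    apply setIntegral_congr_fun measurableSet_Ioc
    intro s _
    have : ∀ y : ℝ, f s y = if y < a + s then (1 - τ) else -τ := by
      intro y; simp only [hf, sub_lt_iff_lt_add']
    simp_rw [this]
    exact step_integral_Q τ (a + s)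
  have hR : ∫ y, (∫ s, f s y ∂μ) ∂Q = innerRisk Q τ (a + u) - innerRisk Q τ a := by
    have : ∀ y : ℝ, ∫ s, f s y ∂μ = pinball τ y (a + u) - pinball τ y a := by
      intro y
      rw [hμ, ← intervalIntegral.integral_of_le hu]
      exact step_integral hτ a u hu y
    simp_rw [this]
    rw [integral_sub (pinball_integrable hτ hsupp (a + u)) (pinball_integrable hτ hsupp a)]
    rfl
  rw [← hL, hswap, hR]

end key2

section key3
variable {τ : ℝ} {Q : Measure ℝ}

lemma Ioo_mono_integrable [IsFiniteMeasure Q] (a t : ℝ) :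
    IntervalIntegrable (fun s => (Q (Set.Ioo a (a + s))).toReal) volume 0 t := by
  apply Monotone.intervalIntegrable
  intro s s' hss'
  exact ENNReal.toReal_mono (measure_ne_top _ _)
    (measure_mono (Set.Ioo_subset_Ioo le_rfl (by linarith)))

lemma integral_split [IsProbabilityMeasure Q] (a t : ℝ) (ht : 0 ≤ t) :
    ∫ s in (0:ℝ)..t, ((Q (Set.Iio (a + s))).toReal - τ)
      = t * ((Q (Set.Iic a)).toReal - τ)
        + ∫ s in (0:ℝ)..t, (Q (Set.Ioo a (a + s))).toReal := by
  have hcongr : ∫ s in (0:ℝ)..t, ((Q (Set.Iio (a + s))).toReal - τ)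
      = ∫ s in (0:ℝ)..t, (((Q (Set.Iic a)).toReal - τ) + (Q (Set.Ioo a (a + s))).toReal) := by
    apply intervalIntegral.integral_congr_ae
    filter_upwards with s hs
    rw [Set.uIoc_of_le ht] at hs
    have hset : Set.Iio (a + s) = Set.Iic a ∪ Set.Ioo a (a + s) := by
      ext x
      simp only [Set.mem_Iio, Set.mem_union, Set.mem_Iic, Set.mem_Ioo]
      constructor
      · intro h; rcases le_or_gt x a with h' | h'
        · exact Or.inl h'
        · exact Or.inr ⟨h', h⟩
      · rintro (h | ⟨_, h⟩) <;> [linarith [hs.1]; exact h]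
    rw [hset, measure_union ?_ measurableSet_Ioo,
      ENNReal.toReal_add (measure_ne_top _ _) (measure_ne_top _ _)]
    · ring
    · rw [Set.disjoint_left]; rintro x (hx : x ≤ a) ⟨hx', _⟩; exact absurd hx' (not_lt.2 hx)
  rw [hcongr, intervalIntegral.integral_add (intervalIntegrable_const) (Ioo_mono_integrable a t),
    intervalIntegral.integral_const, smul_eq_mul, sub_zero]

end key3

section quant
variable {τ : ℝ} {Q : Measure ℝ}

lemma toReal_Ici_eq [IsProbabilityMeasure Q] (x : ℝ) :
    (Q (Set.Ici x)).toReal = 1 - (Q (Set.Iio x)).toReal := by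
  rw [← Set.compl_Iio, prob_compl_eq_one_sub measurableSet_Iio,
    ENNReal.toReal_sub_of_le prob_le_one ENNReal.one_ne_top, ENNReal.toReal_one]

lemma quantileSet_nonempty [IsProbabilityMeasure Q] (hτ : τ ∈ Set.Ioo (0:ℝ) 1)
    (hsupp : Q (Set.Icc (-1:ℝ) 1)ᶜ = 0) : (quantileSet Q τ).Nonempty := by
  set A := {v : ℝ | τ ≤ (Q (Set.Iic v)).toReal} with hA
  have hQ1 : Q (Set.Iic (1:ℝ)) = 1 := by
    have h0 : Q (Set.Iic (1:ℝ))ᶜ = 0 := by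
      apply measure_mono_null _ hsupp
      intro x hx
      simp only [Set.mem_compl_iff, Set.mem_Iic, not_le] at hx
      simp only [Set.mem_compl_iff, Set.mem_Icc, not_and, not_le]
      intro _; exact hx
    rw [measure_congr (ae_eq_univ.2 h0), measure_univ]
  have hAne : (1:ℝ) ∈ A := by simp [hA, hQ1, hτ.2.le]
  have hAbdd : BddBelow A := by
    refine ⟨-1, fun v hv => ?_⟩
    by_contra h
    push_neg at h
    have h0 : Q (Set.Iic v) = 0 := by
      apply measure_mono_null _ hsupp
      intro x hx
      simp only [Set.mem_Iic] at hx
      simp only [Set.mem_compl_iff, Set.mem_Icc, not_and, not_le]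
      intro hx'; linarith
    rw [hA, Set.mem_setOf_eq, h0] at hv
    simp at hv; linarith [hτ.1]
  set w := sInf A with hw
  have hw1 : ENNReal.ofReal τ ≤ Q (Set.Iic w) := by
    have hIic : ⋂ n : ℕ, Set.Iic (w + 1/(n+1)) = Set.Iic w := by
      ext x
      simp only [Set.mem_iInter, Set.mem_Iic]
      constructor
      · intro h
        by_contra hx
        push_neg at hx
        obtain ⟨n, hn⟩ := exists_nat_one_div_lt (sub_pos.2 hx)
        linarith [h n]
      · intro h n
        have : (0:ℝ) < 1/(n+1) := by positivity
        linarith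
    have hanti : Antitone (fun n : ℕ => Set.Iic (w + 1/((n:ℝ)+1))) := by
      intro n k hnk
      apply Set.Iic_subset_Iic.2
      have h1 : 1/((k:ℝ)+1) ≤ 1/((n:ℝ)+1) :=
        one_div_le_one_div_of_le (by positivity) (by exact_mod_cast by linarith)
      linarith
    have hseq := tendsto_measure_iInter_atTop (μ := Q)
      (fun n : ℕ => measurableSet_Iic.nullMeasurableSet) hanti ⟨0, measure_ne_top _ _⟩
    rw [hIic] at hseq
    refine ge_of_tendsto' hseq fun n => ?_
    have hpos : (0:ℝ) < 1/((n:ℝ)+1) := by positivity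
    obtain ⟨v, hvA, hv⟩ := (csInf_lt_iff hAbdd ⟨1, hAne⟩).1 (lt_add_of_pos_right w hpos)
    calc ENNReal.ofReal τ ≤ Q (Set.Iic v) := ENNReal.ofReal_le_of_le_toReal hvA
      _ ≤ Q (Set.Iic (w + 1/((n:ℝ)+1))) := measure_mono (Set.Iic_subset_Iic.2 hv.le)
  have hw2 : Q (Set.Iio w) ≤ ENNReal.ofReal τ := by
    have hIio : ⋃ n : ℕ, Set.Iic (w - 1/((n:ℝ)+1)) = Set.Iio w := by
      ext x
      simp only [Set.mem_iUnion, Set.mem_Iic, Set.mem_Iio]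
      constructor
      · rintro ⟨n, hn⟩
        have : (0:ℝ) < 1/((n:ℝ)+1) := by positivity
        linarith
      · intro h
        obtain ⟨n, hn⟩ := exists_nat_one_div_lt (sub_pos.2 h)
        exact ⟨n, by linarith⟩
    have hmono : Monotone (fun n : ℕ => Set.Iic (w - 1/((n:ℝ)+1))) := by
      intro n k hnk
      apply Set.Iic_subset_Iic.2
      have h1 : 1/((k:ℝ)+1) ≤ 1/((n:ℝ)+1) :=
        one_div_le_one_div_of_le (by positivity) (by exact_mod_cast by linarith)
      linarith
    have hseq := tendsto_measure_iUnion_atTop (μ := Q) hmono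
    rw [hIio] at hseq
    refine le_of_tendsto' hseq fun n => ?_
    have hnA : w - 1/((n:ℝ)+1) ∉ A := by
      intro h
      have := csInf_le hAbdd h
      have hpos : (0:ℝ) < 1/((n:ℝ)+1) := by positivity
      rw [← hw] at this
      linarith
    rw [hA, Set.mem_setOf_eq, not_le] at hnA
    exact (ENNReal.le_ofReal_iff_toReal_le (measure_ne_top _ _) hτ.1.le).2 hnA.le
  refine ⟨w, ?_, ?_⟩
  · have := ENNReal.toReal_mono (measure_ne_top _ _) hw1
    rwa [ENNReal.toReal_ofReal hτ.1.le] at this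
  · have h2 : (Q (Set.Iio w)).toReal ≤ τ := by
      have := ENNReal.toReal_mono ENNReal.ofReal_ne_top hw2
      rwa [ENNReal.toReal_ofReal hτ.1.le] at this
    rw [toReal_Ici_eq]
    linarith

lemma quantileSet_subset_Iic (hτ : τ ∈ Set.Ioo (0:ℝ) 1) [IsProbabilityMeasure Q]
    (hsupp : Q (Set.Icc (-1:ℝ) 1)ᶜ = 0) : quantileSet Q τ ⊆ Set.Iic 1 := by
  intro t ht
  by_contra h
  simp only [Set.mem_Iic, not_le] at h
  have h0 : Q (Set.Ici t) = 0 := by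
    apply measure_mono_null _ hsupp
    intro x hx
    simp only [Set.mem_Ici] at hx
    simp only [Set.mem_compl_iff, Set.mem_Icc, not_and, not_le]
    intro _; linarith
  have := ht.2
  rw [h0] at this
  simp at this
  linarith [hτ.2]

lemma tqmax_mem (hτ : τ ∈ Set.Ioo (0:ℝ) 1) [IsProbabilityMeasure Q]
    (hsupp : Q (Set.Icc (-1:ℝ) 1)ᶜ = 0) : tqmax Q τ ∈ quantileSet Q τ := by
  obtain ⟨w, hw⟩ := quantileSet_nonempty hτ hsupp
  have hbdd : BddAbove (quantileSet Q τ) := ⟨1, fun t ht => quantileSet_subset_Iic hτ hsupp ht⟩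
  set m := tqmax Q τ with hm
  constructor
  · have hwm : w ≤ m := le_csSup hbdd hw
    exact le_trans hw.1
      (ENNReal.toReal_mono (measure_ne_top _ _) (measure_mono (Set.Iic_subset_Iic.2 hwm)))
  · have hIci : ⋂ n : ℕ, Set.Ioi (m - 1/((n:ℝ)+1)) = Set.Ici m := by
      ext x
      simp only [Set.mem_iInter, Set.mem_Ioi, Set.mem_Ici]
      constructor
      · intro h
        by_contra hx
        push_neg at hx
        obtain ⟨n, hn⟩ := exists_nat_one_div_lt (sub_pos.2 hx)
        linarith [h n]
      · intro h n
        have : (0:ℝ) < 1/((n:ℝ)+1) := by positivity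
        linarith
    have hanti : Antitone (fun n : ℕ => Set.Ioi (m - 1/((n:ℝ)+1))) := by
      intro n k hnk
      apply Set.Ioi_subset_Ioi
      have h1 : 1/((k:ℝ)+1) ≤ 1/((n:ℝ)+1) :=
        one_div_le_one_div_of_le (by positivity) (by exact_mod_cast by linarith)
      linarith
    have hseq := tendsto_measure_iInter_atTop (μ := Q)
      (fun n : ℕ => measurableSet_Ioi.nullMeasurableSet) hanti ⟨0, measure_ne_top _ _⟩
    rw [hIci] at hseq
    have hterm : ∀ n : ℕ, ENNReal.ofReal (1 - τ) ≤ Q (Set.Ioi (m - 1/((n:ℝ)+1))) := by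
      intro n
      have hpos : (0:ℝ) < 1/((n:ℝ)+1) := by positivity
      obtain ⟨v, hvS, hv⟩ := exists_lt_of_lt_csSup ⟨w, hw⟩ (show m - 1/((n:ℝ)+1) < m by linarith)
      calc ENNReal.ofReal (1 - τ) ≤ Q (Set.Ici v) := ENNReal.ofReal_le_of_le_toReal hvS.2
        _ ≤ Q (Set.Ioi (m - 1/((n:ℝ)+1))) :=
            measure_mono (fun x hx => lt_of_lt_of_le hv hx)
    have hfin := ge_of_tendsto' hseq hterm
    have := ENNReal.toReal_mono (measure_ne_top _ _) hfin
    rwa [ENNReal.toReal_ofReal (by linarith [hτ.2])] at this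

end quant

section final
variable {τ : ℝ} {Q : Measure ℝ}

lemma risk_min (hτ : τ ∈ Set.Ioo (0:ℝ) 1) [IsProbabilityMeasure Q]
    (hsupp : Q (Set.Icc (-1:ℝ) 1)ᶜ = 0) (t : ℝ) :
    innerRisk Q τ (tqmax Q τ) ≤ innerRisk Q τ t := by
  set m := tqmax Q τ with hm
  have hmem := tqmax_mem hτ hsupp
  rcases le_total t m with h | h
  · have key := risk_diff hτ hsupp t (m - t) (by linarith)
    rw [show t + (m - t) = m by ring] at key
    have hQm : (Q (Set.Iio m)).toReal ≤ τ := by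
      have h2 := hmem.2
      rw [toReal_Ici_eq] at h2
      linarith
    have hle : ∫ s in (0:ℝ)..(m - t), ((Q (Set.Iio (t + s))).toReal - τ) ≤ 0 := by
      rw [← neg_nonneg, ← intervalIntegral.integral_neg]
      apply intervalIntegral.integral_nonneg (by linarith)
      intro s hs
      have h1 : Q (Set.Iio (t + s)) ≤ Q (Set.Iio m) :=
        measure_mono (Set.Iio_subset_Iio (by linarith [hs.2]))
      have h2 := ENNReal.toReal_mono (measure_ne_top _ _) h1
      simp only [neg_nonneg, sub_nonpos]
      linarith
    linarith [key]
  · have key := risk_diff hτ hsupp m (t - m) (by linarith)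
    rw [show m + (t - m) = t by ring, integral_split m (t - m) (by linarith)] at key
    have h1 : 0 ≤ (t - m) * ((Q (Set.Iic m)).toReal - τ) :=
      mul_nonneg (by linarith) (by linarith [hmem.1])
    have h2 : 0 ≤ ∫ s in (0:ℝ)..(t - m), (Q (Set.Ioo m (m + s))).toReal :=
      intervalIntegral.integral_nonneg (by linarith) (fun s _ => ENNReal.toReal_nonneg)
    linarith

end final


/-- Excess inner risk to the right of the quantile interval:
`C_Q(t*_max + t) − C*_Q = t·q₊ + ∫₀ᵗ Q((t*_max, t*_max+s)) ds` with
`q₊ = Q((−∞,t*_max]) − τ`. -/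
theorem stmt7 (τ : ℝ) (hτ : τ ∈ Set.Ioo (0:ℝ) 1) (Q : Measure ℝ) [IsProbabilityMeasure Q]
    (hsupp : Q (Set.Icc (-1:ℝ) 1)ᶜ = 0) :
    ∀ t : ℝ, 0 ≤ t →
      innerRisk Q τ (tqmax Q τ + t) - (⨅ s : ℝ, innerRisk Q τ s)
        = t * ((Q (Set.Iic (tqmax Q τ))).toReal - τ)
          + ∫ s in (0:ℝ)..t, (Q (Set.Ioo (tqmax Q τ) (tqmax Q τ + s))).toReal := by
  intro t ht
  have hinf : (⨅ s : ℝ, innerRisk Q τ s) = innerRisk Q τ (tqmax Q τ) := by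
    apply le_antisymm
    · exact ciInf_le ⟨innerRisk Q τ (tqmax Q τ), by
        rintro x ⟨s, rfl⟩; exact risk_min hτ hsupp s⟩ _
    · exact le_ciInf (risk_min hτ hsupp)
  rw [hinf, risk_diff hτ hsupp _ t ht, integral_split _ t ht]
end

section
/- Let ν be a probability measure with support in [−1,1], t_min < t_max in [−1,1] with ν([t_min, t_max]) = 0, and Q = (1−α−β)ν + α·δ_{t_min} + β·δ_{t_max} for α, β ∈ (0,1] with α + β ≤ 1. Then for τ := (1−α−β)·ν((−∞,t_min]) + α, the τ-quantile set of Q equals [t_min, t_max], and this quantile is of type q = 1 with b_Q = min{α, β}. -/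
open MeasureTheory Set

lemma meas_union_null {μ : MeasureTheory.Measure ℝ} {s t : Set ℝ} (ht : μ t = 0) :
    μ (s ∪ t) = μ s :=
  le_antisymm ((measure_union_le s t).trans (by simp [ht])) (measure_mono Set.subset_union_left)

lemma meas_union_null' {μ : MeasureTheory.Measure ℝ} {s t : Set ℝ} (hs : μ s = 0) :
    μ (s ∪ t) = μ t := by rw [Set.union_comm]; exact meas_union_null hs

/-- If `Q = (1−α−β)·ν + α·δ_{t_min} + β·δ_{t_max}` with `ν([t_min,t_max]) = 0`, then for
`τ = (1−α−β)·ν((−∞,t_min]) + α` the τ-quantile set of `Q` is `[t_min, t_max]` and this quantile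
is of type `q = 1` with `b_Q = min{α, β}`. -/
theorem stmt18 (α β tmin tmax : ℝ)
    (hα : α ∈ Set.Ioc (0:ℝ) 1) (hβ : β ∈ Set.Ioc (0:ℝ) 1) (hαβ : α + β ≤ 1)
    (htm : tmin ∈ Set.Icc (-1:ℝ) 1) (htM : tmax ∈ Set.Icc (-1:ℝ) 1) (hlt : tmin < tmax)
    (ν : Measure ℝ) [IsProbabilityMeasure ν] (hν : ν (Set.Icc (-1:ℝ) 1)ᶜ = 0)
    (hν0 : ν (Set.Icc tmin tmax) = 0)
    (Q : Measure ℝ)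
    (hQ : Q = ENNReal.ofReal (1 - α - β) • ν + ENNReal.ofReal α • Measure.dirac tmin
            + ENNReal.ofReal β • Measure.dirac tmax)
    (τ : ℝ) (hτ : τ = (1 - α - β) * (ν (Set.Iic tmin)).toReal + α) :
    quantileSet Q τ = Set.Icc tmin tmax ∧ quantileTypeQ Q τ 1 2 (min α β) := by
  classical
  obtain ⟨hα0, hα1⟩ := hα
  obtain ⟨hβ0, hβ1⟩ := hβ
  set c : ℝ := 1 - α - β with hcdef
  have hc : 0 ≤ c := by simp only [hcdef]; linarith
  have hνmin : ν {tmin} = 0 :=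
    measure_mono_null (by simp [Set.singleton_subset_iff, hlt.le]) hν0
  have hνmax : ν {tmax} = 0 :=
    measure_mono_null (by simp [Set.singleton_subset_iff, hlt.le]) hν0
  have Qs : ∀ s : Set ℝ, MeasurableSet s → (Q s).toReal =
      c * (ν s).toReal + (if tmin ∈ s then α else 0) + (if tmax ∈ s then β else 0) := by
    intro s hs
    have h1 : (ENNReal.ofReal c * ν s) ≠ ⊤ :=
      ENNReal.mul_ne_top ENNReal.ofReal_ne_top (measure_ne_top ν s)
    have h2 : (ENNReal.ofReal α * Measure.dirac tmin s) ≠ ⊤ :=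
      ENNReal.mul_ne_top ENNReal.ofReal_ne_top (measure_ne_top _ s)
    have h3 : (ENNReal.ofReal β * Measure.dirac tmax s) ≠ ⊤ :=
      ENNReal.mul_ne_top ENNReal.ofReal_ne_top (measure_ne_top _ s)
    rw [hQ]
    simp only [Measure.add_apply, Measure.smul_apply, smul_eq_mul]
    rw [ENNReal.toReal_add (ENNReal.add_ne_top.2 ⟨h1, h2⟩) h3, ENNReal.toReal_add h1 h2,
      ENNReal.toReal_mul, ENNReal.toReal_mul, ENNReal.toReal_mul,
      ENNReal.toReal_ofReal hc, ENNReal.toReal_ofReal hα0.le, ENNReal.toReal_ofReal hβ0.le,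
      Measure.dirac_apply' _ hs, Measure.dirac_apply' _ hs]
    by_cases h4 : tmin ∈ s <;> by_cases h5 : tmax ∈ s <;>
      simp [h4, h5, Set.indicator_apply]
  set A : ℝ := (ν (Set.Iic tmin)).toReal with hA
  have hτval : τ = c * A + α := hτ
  have hIciMin : (ν (Set.Ici tmin)).toReal = 1 - A := by
    have h1 : ν (Set.Ici tmin) = ν (Set.Ioi tmin) := by
      rw [← Set.Ioi_union_left, meas_union_null hνmin]
    have h2 : ν (Set.Ioi tmin) = 1 - ν (Set.Iic tmin) := by
      rw [← Set.compl_Iic]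
      exact prob_compl_eq_one_sub measurableSet_Iic
    rw [h1, h2, ENNReal.toReal_sub_of_le prob_le_one ENNReal.one_ne_top, ENNReal.toReal_one]
  have hA0 : 0 ≤ A := ENNReal.toReal_nonneg
  have hIic_eq : ∀ t : ℝ, tmin ≤ t → t ≤ tmax → ν (Set.Iic t) = ν (Set.Iic tmin) := by
    intro t h1 h2
    have hnull : ν (Set.Ioc tmin t) = 0 := by
      refine measure_mono_null ?_ hν0
      intro x hx
      exact Set.mem_Icc.2 ⟨(Set.mem_Ioc.1 hx).1.le, (Set.mem_Ioc.1 hx).2.trans h2⟩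
    rw [← Set.Iic_union_Ioc_eq_Iic h1, meas_union_null hnull]
  have hIci_eq : ∀ t : ℝ, tmin ≤ t → t ≤ tmax → ν (Set.Ici t) = ν (Set.Ici tmin) := by
    intro t h1 h2
    conv_rhs => rw [← Set.Ico_union_Ici_eq_Ici h1]
    have hnull : ν (Set.Ico tmin t) = 0 := by
      refine measure_mono_null ?_ hν0
      intro x hx
      exact Set.mem_Icc.2 ⟨(Set.mem_Ico.1 hx).1, (Set.mem_Ico.1 hx).2.le.trans h2⟩
    rw [meas_union_null' hnull]
  have hexp : c * (1 - A) = c - c * A := by ring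
  have hsum : c + α + β = 1 := by simp only [hcdef]; ring
  have hset : quantileSet Q τ = Set.Icc tmin tmax := by
    ext t
    simp only [quantileSet, Set.mem_setOf_eq, Set.mem_Icc]
    rw [Qs _ measurableSet_Iic, Qs _ measurableSet_Ici]
    simp only [Set.mem_Iic, Set.mem_Ici]
    constructor
    · rintro ⟨h1, h2⟩
      constructor
      · by_contra h
        push_neg at h
        rw [if_neg (not_le.2 h), if_neg (not_le.2 (h.trans hlt))] at h1
        have hm : (ν (Set.Iic t)).toReal ≤ A :=
          ENNReal.toReal_mono (measure_ne_top ν _) (measure_mono (Set.Iic_subset_Iic.2 h.le))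
        have := mul_le_mul_of_nonneg_left hm hc
        linarith
      · by_contra h
        push_neg at h
        rw [if_neg (not_le.2 (hlt.trans h)), if_neg (not_le.2 h)] at h2
        have hm : (ν (Set.Ici t)).toReal ≤ 1 - A := by
          rw [← hIciMin]
          exact ENNReal.toReal_mono (measure_ne_top ν _)
            (measure_mono (Set.Ici_subset_Ici.2 (hlt.le.trans h.le)))
        have := mul_le_mul_of_nonneg_left hm hc
        linarith
    · rintro ⟨h1, h2⟩
      constructor
      · rw [hIic_eq t h1 h2, if_pos h1, ← hA]
        split_ifs with h <;> linarith
      · rw [hIci_eq t h1 h2, hIciMin, if_pos h2]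
        split_ifs with h <;> linarith
  have hmin : tqmin Q τ = tmin := by rw [tqmin, hset, csInf_Icc hlt.le]
  have hmax : tqmax Q τ = tmax := by rw [tqmax, hset, csSup_Icc hlt.le]
  have hQmin : (Q {tmin}).toReal = α := by
    rw [Qs _ (measurableSet_singleton _), hνmin]
    simp [hlt.ne']
  have hQmax : (Q {tmax}).toReal = β := by
    rw [Qs _ (measurableSet_singleton _), hνmax]
    simp [hlt.ne]
  refine ⟨hset, Or.inr ⟨rfl, rfl, ?_, ?_, ?_⟩⟩
  · rw [hmin, hQmin]; exact hα0
  · rw [hmax, hQmax]; exact hβ0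
  · rw [hmin, hmax, hQmin, hQmax, if_pos hlt.ne]
end
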